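/- arXiv:1204.2377 — 5 statements merged into one kernel-verified Lean document; each statement's English description precedes it below -/
import Mathlib

section
/- There exists a group homomorphism f: B_4 → Aut(F_2) from the braid group on 4 strands sending the standard generators to f(σ₁) = G, f(σ₂) = D⁻¹, f(σ₃) = G̃. -/
open FreeGroup

/-- The braid relations defining the braid group `B₄` on generators `σ₁, σ₂, σ₃`. -/
def braidRels4 : Set (FreeGroup (Fin 3)) :=
  { of 0 * of 1 * of 0 * (of 1 * of 0 * of 1)⁻¹,
    of 1 * of 2 * of 1 * (of 2 * of 1 * of 2)⁻¹,
    of 0 * of 2 * (of 2 * of 0)⁻¹ }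

lemma aut_ext_F2 (φ ψ : MulAut (FreeGroup (Fin 2)))
    (h0 : φ (of 0) = ψ (of 0)) (h1 : φ (of 1) = ψ (of 1)) : φ = ψ := by
  apply MulEquiv.toMonoidHom_injective
  apply FreeGroup.ext_hom
  intro a
  fin_cases a <;> assumption

/-- There is a group homomorphism `f : B₄ → Aut(F₂)` with `f(σ₁) = G`,
`f(σ₂) = D⁻¹`, `f(σ₃) = G̃`. -/
theorem exists_hom_B4_to_AutF2
    (G D Gt : MulAut (FreeGroup (Fin 2)))
    (hGa : G (of 0) = of 0) (hGb : G (of 1) = of 0 * of 1)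
    (hDa : D (of 0) = of 1 * of 0) (hDb : D (of 1) = of 1)
    (hGta : Gt (of 0) = of 0) (hGtb : Gt (of 1) = of 1 * of 0) :
    ∃ f : PresentedGroup braidRels4 →* MulAut (FreeGroup (Fin 2)),
      f (PresentedGroup.of 0) = G ∧
      f (PresentedGroup.of 1) = D⁻¹ ∧
      f (PresentedGroup.of 2) = Gt := by
  have hEa : D⁻¹ (of 0) = (of 1)⁻¹ * of 0 := by
    apply D.injective
    rw [MulAut.apply_inv_self, _root_.map_mul, _root_.map_inv, hDa, hDb]
    group
  have hEb : D⁻¹ (of 1) = of 1 := by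
    apply D.injective
    rw [MulAut.apply_inv_self, hDb]
  set F : Fin 3 → MulAut (FreeGroup (Fin 2)) := ![G, D⁻¹, Gt] with hF
  have r1 : G * D⁻¹ * G = D⁻¹ * G * D⁻¹ := by
    apply aut_ext_F2 <;>
      simp only [MulAut.mul_apply, hGa, hGb, hEa, hEb, _root_.map_mul, _root_.map_inv, mul_assoc, mul_inv_rev] <;> group
  have r2 : D⁻¹ * Gt * D⁻¹ = Gt * D⁻¹ * Gt := by
    apply aut_ext_F2 <;>
      simp only [MulAut.mul_apply, hGta, hGtb, hEa, hEb, _root_.map_mul, _root_.map_inv, mul_assoc, mul_inv_rev] <;> group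
  have r3 : G * Gt = Gt * G := by
    apply aut_ext_F2 <;>
      simp only [MulAut.mul_apply, hGa, hGb, hGta, hGtb, _root_.map_mul, _root_.map_inv, mul_assoc, mul_inv_rev]
  have hrel : ∀ r ∈ braidRels4, FreeGroup.lift F r = 1 := by
    intro r hr
    simp only [braidRels4, Set.mem_insert_iff, Set.mem_singleton_iff] at hr
    rcases hr with h | h | h <;> subst h <;>
      simp only [_root_.map_mul, _root_.map_inv, FreeGroup.lift_apply_of, hF, Matrix.cons_val_zero,
        Matrix.cons_val_one, Matrix.head_cons, Matrix.cons_val_two, Matrix.tail_cons] <;>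
      rw [mul_inv_eq_one]
    · exact r1
    · exact r2
    · exact r3
  refine ⟨PresentedGroup.toGroup hrel, ?_, ?_, ?_⟩ <;>
    simp [PresentedGroup.toGroup.of, hF]
end

section
/- For 1 ≤ i ≤ g−1, the automorphisms u_{2i} and u_{2i+1} of F_{2g} satisfy the braid relation u_{2i} u_{2i+1} u_{2i} = u_{2i+1} u_{2i} u_{2i+1}, where u_{2i} sends a_i to b_i⁻¹·a_i fixing other generators, and u_{2i+1} sends b_i to b_i·a_i·a_{i+1}⁻¹ and b_{i+1} to a_{i+1}·a_i⁻¹·b_{i+1} fixing other generators. -/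
open FreeGroup

/-- For `1 ≤ i ≤ g-1` (here `0`-indexed: `i+1 < g`), the automorphisms `u₂ᵢ` and
`u₂ᵢ₊₁` of the free group `F₂g` on generators `aⱼ = of (Sum.inl j)`,
`bⱼ = of (Sum.inr j)` satisfy the braid relation
`u₂ᵢ u₂ᵢ₊₁ u₂ᵢ = u₂ᵢ₊₁ u₂ᵢ u₂ᵢ₊₁`.  Here `u₂ᵢ` sends `aᵢ ↦ bᵢ⁻¹·aᵢ` fixing all
other generators, and `u₂ᵢ₊₁` sends `bᵢ ↦ bᵢ·aᵢ·aᵢ₊₁⁻¹`, `bᵢ₊₁ ↦ aᵢ₊₁·aᵢ⁻¹·bᵢ₊₁`,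
fixing all other generators. -/
theorem braid_relation_even_odd (g i : ℕ) (hg : 2 ≤ g) (hi : i + 1 < g)
    (U V : MulAut (FreeGroup (Fin g ⊕ Fin g)))
    (I : Fin g) (I' : Fin g) (hI : I = ⟨i, Nat.lt_of_succ_lt hi⟩) (hI' : I' = ⟨i + 1, hi⟩)
    (hU : U (of (Sum.inl I)) = (of (Sum.inr I))⁻¹ * of (Sum.inl I))
    (hUfix : ∀ x : Fin g ⊕ Fin g, x ≠ Sum.inl I → U (of x) = of x)
    (hV1 : V (of (Sum.inr I)) = of (Sum.inr I) * of (Sum.inl I) * (of (Sum.inl I'))⁻¹)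
    (hV2 : V (of (Sum.inr I')) = of (Sum.inl I') * (of (Sum.inl I))⁻¹ * of (Sum.inr I'))
    (hVfix : ∀ x : Fin g ⊕ Fin g, x ≠ Sum.inr I → x ≠ Sum.inr I' → V (of x) = of x) :
    U * V * U = V * U * V := by
  have hII' : I ≠ I' := by
    subst hI hI'
    simp [Fin.ext_iff]
  have Ua' : U (of (Sum.inl I')) = of (Sum.inl I') :=
    hUfix _ (by simp [hII'.symm])
  have Ub : ∀ J : Fin g, U (of (Sum.inr J)) = of (Sum.inr J) :=
    fun J => hUfix _ (by simp)
  have Va : ∀ J : Fin g, V (of (Sum.inl J)) = of (Sum.inl J) :=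
    fun J => hVfix _ (by simp) (by simp)
  have key : ∀ x : Fin g ⊕ Fin g, (U * V * U) (of x) = (V * U * V) (of x) := by
    rintro (J | J)
    · by_cases h : J = I
      · subst h
        simp only [MulAut.mul_apply, hU, Va, _root_.map_mul, _root_.map_inv, hV1, Ub, Ua', mul_inv_rev,
          inv_inv]
        group
      · have UaJ : U (of (Sum.inl J)) = of (Sum.inl J) := hUfix _ (by simp [h])
        simp [MulAut.mul_apply, UaJ, Va]
    · by_cases h : J = I
      · subst h
        simp only [MulAut.mul_apply, Ub, hV1, _root_.map_mul, _root_.map_inv, hU, Ua', Va, mul_inv_rev,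
          inv_inv]
        group
      · by_cases h' : J = I'
        · subst h'
          simp only [MulAut.mul_apply, Ub, hV2, _root_.map_mul, _root_.map_inv, hU, Ua', Va, hV1,
            mul_inv_rev, inv_inv]
          group
        · have VbJ : V (of (Sum.inr J)) = of (Sum.inr J) :=
            hVfix _ (by simp [h]) (by simp [h'])
          simp [MulAut.mul_apply, Ub, VbJ]
  have : (U * V * U).toMonoidHom = (V * U * V).toMonoidHom :=
    FreeGroup.ext_hom _ _ key
  exact MulEquiv.toMonoidHom_injective this
end

section
/- For the free group F_4 on a₁, a₂, b₁, b₂, the five automorphisms u₁,…,u₅ (defined by u₁(b₁)=a₁b₁, u₂(a₁)=b₁⁻¹a₁, u₃(b₁)=b₁a₁a₂⁻¹ and u₃(b₂)=a₂a₁⁻¹b₂, u₄(a₂)=b₂⁻¹a₂, u₅(b₂)=b₂a₂, each fixing all other generators) satisfy all the braid relations: u_i u_j = u_j u_i for |i−j| > 1 and u_i u_j u_i = u_j u_i u_j for |i−j| = 1. -/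
open FreeGroup

/-- `F₄` is the free group on four generators `a₁ = of 0`, `a₂ = of 1`,
`b₁ = of 2`, `b₂ = of 3`. -/
abbrev F4 := FreeGroup (Fin 4)

/-- Specification of the five automorphisms `u₁, …, u₅` of `F₄` (indexed by
`Fin 5`): `u₁(b₁) = a₁b₁`, `u₂(a₁) = b₁⁻¹a₁`, `u₃(b₁) = b₁a₁a₂⁻¹`,
`u₃(b₂) = a₂a₁⁻¹b₂`, `u₄(a₂) = b₂⁻¹a₂`, `u₅(b₂) = b₂a₂`, each fixing all
other generators. -/
def uSpec (u : Fin 5 → MulAut F4) : Prop :=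
  (u 0 (of 0) = of 0 ∧ u 0 (of 1) = of 1 ∧
    u 0 (of 2) = of 0 * of 2 ∧ u 0 (of 3) = of 3) ∧
  (u 1 (of 0) = (of 2)⁻¹ * of 0 ∧ u 1 (of 1) = of 1 ∧
    u 1 (of 2) = of 2 ∧ u 1 (of 3) = of 3) ∧
  (u 2 (of 0) = of 0 ∧ u 2 (of 1) = of 1 ∧
    u 2 (of 2) = of 2 * of 0 * (of 1)⁻¹ ∧ u 2 (of 3) = of 1 * (of 0)⁻¹ * of 3) ∧
  (u 3 (of 0) = of 0 ∧ u 3 (of 1) = (of 3)⁻¹ * of 1 ∧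
    u 3 (of 2) = of 2 ∧ u 3 (of 3) = of 3) ∧
  (u 4 (of 0) = of 0 ∧ u 4 (of 1) = of 1 ∧
    u 4 (of 2) = of 2 ∧ u 4 (of 3) = of 3 * of 1)

lemma aut_ext' (φ ψ : MulAut F4) (h : ∀ i, φ (of i) = ψ (of i)) : φ = ψ := by
  ext x
  exact DFunLike.congr_fun (FreeGroup.ext_hom (φ : F4 →* F4) (ψ : F4 →* F4) h) x

/-- The automorphisms `u₁, …, u₅` of `F₄` satisfy all the braid relations:
`uᵢuⱼ = uⱼuᵢ` for `|i−j| > 1` and `uᵢuⱼuᵢ = uⱼuᵢuⱼ` for `|i−j| = 1`. -/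
theorem u_braid_relations (u : Fin 5 → MulAut F4) (hu : uSpec u) :
    ∀ i j : Fin 5,
      (|(i : ℤ) - (j : ℤ)| > 1 → u i * u j = u j * u i) ∧
      (|(i : ℤ) - (j : ℤ)| = 1 → u i * u j * u i = u j * u i * u j) := by
  obtain ⟨⟨h00,h01,h02,h03⟩,⟨h10,h11,h12,h13⟩,⟨h20,h21,h22,h23⟩,⟨h30,h31,h32,h33⟩,⟨h40,h41,h42,h43⟩⟩ := hu
  intro i j
  fin_cases i <;> fin_cases j <;>
    constructor <;> intro h <;>
    first
    | (exfalso; revert h; norm_num; done)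
    | (apply aut_ext'
       intro a
       fin_cases a <;>
         simp [MulAut.mul_apply, map_mul, map_inv,
           h00,h01,h02,h03,h10,h11,h12,h13,h20,h21,h22,h23,h30,h31,h32,h33,h40,h41,h42,h43] <;>
         group)
end

section
/- There exists a group homomorphism f: B_6 → Aut(F_4) from the braid group on 6 strands with f(σ_i) = u_i for i = 1,…,5. -/
open FreeGroup

set_option maxHeartbeats 2000000

/-- The braid relations defining the braid group `B₆` on generators `σ₁, …, σ₅`. -/
def braidRels6 : Set (FreeGroup (Fin 5)) :=
  { r | (∃ i j : Fin 5, |(i : ℤ) - (j : ℤ)| = 1 ∧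
          r = of i * of j * of i * (of j * of i * of j)⁻¹) ∨
        (∃ i j : Fin 5, |(i : ℤ) - (j : ℤ)| > 1 ∧
          r = of i * of j * (of j * of i)⁻¹) }

lemma fin5_mk2 {h} : (⟨2, h⟩ : Fin 5) = 2 := rfl
lemma fin5_mk3 {h} : (⟨3, h⟩ : Fin 5) = 3 := rfl
lemma fin5_mk4 {h} : (⟨4, h⟩ : Fin 5) = 4 := rfl
lemma fin4_mk2 {h} : (⟨2, h⟩ : Fin 4) = 2 := rfl
lemma fin4_mk3 {h} : (⟨3, h⟩ : Fin 4) = 3 := rfl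

lemma autext {e₁ e₂ : MulAut F4} (h : ∀ i, e₁ (of i) = e₂ (of i)) : e₁ = e₂ := by
  apply MulEquiv.toMonoidHom_injective
  exact FreeGroup.ext_hom _ _ h

/-- There is a group homomorphism `f : B₆ → Aut(F₄)` with `f(σᵢ) = uᵢ` for
`i = 1, …, 5`. -/
theorem exists_hom_B6_to_AutF4 (u : Fin 5 → MulAut F4) (hu : uSpec u) :
    ∃ f : PresentedGroup braidRels6 →* MulAut F4,
      ∀ i : Fin 5, f (PresentedGroup.of i) = u i := by
  obtain ⟨⟨h00, h01, h02, h03⟩, ⟨h10, h11, h12, h13⟩, ⟨h20, h21, h22, h23⟩,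
    ⟨h30, h31, h32, h33⟩, ⟨h40, h41, h42, h43⟩⟩ := hu
  have key : ∀ r ∈ braidRels6, FreeGroup.lift u r = 1 := by
    rintro r (⟨i, j, hij, rfl⟩ | ⟨i, j, hij, rfl⟩) <;>
      simp only [_root_.map_mul, _root_.map_inv, FreeGroup.lift_apply_of, mul_inv_eq_one] <;>
      fin_cases i <;> fin_cases j <;>
      first
        | exact absurd hij (by decide)
        | (apply autext; intro k; fin_cases k <;>
            simp only [Fin.mk_zero, Fin.mk_one, fin5_mk2, fin5_mk3, fin5_mk4,
              fin4_mk2, fin4_mk3,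
              MulAut.mul_apply, _root_.map_mul, _root_.map_inv, mul_inv_rev, inv_inv,
              h00, h01, h02, h03, h10, h11, h12, h13, h20, h21, h22, h23,
              h30, h31, h32, h33, h40, h41, h42, h43] <;> group)
  exact ⟨PresentedGroup.toGroup key, fun i => PresentedGroup.toGroup.of key⟩
end

section
/- The submonoid of Aut(F_2) generated by the automorphisms G: (a,b) ↦ (a, ab) and D: (a,b) ↦ (ba, b) is a free monoid on these two generators. -/
open FreeGroup

private def EE (j : Fin 2) : FreeGroup (Fin 2) →* Multiplicative ℤ :=
  FreeGroup.lift fun i => Multiplicative.ofAdd (if i = j then 1 else 0)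

private lemma EE_of (j i : Fin 2) :
    EE j (of i) = Multiplicative.ofAdd (if i = j then 1 else 0) :=
  FreeGroup.lift_apply_of

/-- entry (i,j) of the abelianized matrix of `T` -/
private def ent (T : MulAut (FreeGroup (Fin 2))) (i j : Fin 2) : ℤ :=
  Multiplicative.toAdd (EE i (T (of j)))

private lemma hext (T : MulAut (FreeGroup (Fin 2)))
    (f g : FreeGroup (Fin 2) →* Multiplicative ℤ)
    (h0 : f (T (of 0)) = g (of 0)) (h1 : f (T (of 1)) = g (of 1)) (y : FreeGroup (Fin 2)) :
    f (T y) = g y := by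
  have h : f.comp T.toMonoidHom = g := by
    apply FreeGroup.ext_hom
    intro i
    fin_cases i
    · simpa using h0
    · simpa using h1
  simpa using DFunLike.congr_fun h y

/-- The submonoid of `Aut(F₂)` generated by `G : (a,b) ↦ (a, ab)` and
`D : (a,b) ↦ (ba, b)` is free on these generators: two products of elements of
`{G, D}` coincide only if the corresponding words in the two letters coincide. -/
theorem GD_free_monoid
    (G D : MulAut (FreeGroup (Fin 2)))
    (hGa : G (of 0) = of 0) (hGb : G (of 1) = of 0 * of 1)
    (hDa : D (of 0) = of 1 * of 0) (hDb : D (of 1) = of 1) :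
    ∀ l₁ l₂ : List Bool,
      (l₁.map (fun x => if x then G else D)).prod =
        (l₂.map (fun x => if x then G else D)).prod → l₁ = l₂ := by
  have hG0 : ∀ y, Multiplicative.toAdd (EE 0 (G y))
      = Multiplicative.toAdd (EE 0 y) + Multiplicative.toAdd (EE 1 y) := by
    intro y
    have := hext G (EE 0) (EE 0 * EE 1)
      (by simp [hGa, EE_of]) (by simp [hGb, EE_of, ← ofAdd_add]) y
    simp [this]
  have hG1 : ∀ y, Multiplicative.toAdd (EE 1 (G y)) = Multiplicative.toAdd (EE 1 y) := by
    intro y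
    have := hext G (EE 1) (EE 1) (by simp [hGa]) (by simp [hGb, EE_of, ← ofAdd_add]) y
    simp [this]
  have hD0 : ∀ y, Multiplicative.toAdd (EE 0 (D y)) = Multiplicative.toAdd (EE 0 y) := by
    intro y
    have := hext D (EE 0) (EE 0) (by simp [hDa, EE_of, ← ofAdd_add]) (by simp [hDb]) y
    simp [this]
  have hD1 : ∀ y, Multiplicative.toAdd (EE 1 (D y))
      = Multiplicative.toAdd (EE 0 y) + Multiplicative.toAdd (EE 1 y) := by
    intro y
    have := hext D (EE 1) (EE 0 * EE 1)
      (by simp [hDa, EE_of, ← ofAdd_add]) (by simp [hDb, EE_of, ← ofAdd_add]) y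
    simp [this]
  -- product of the list of automorphisms
  set P : List Bool → MulAut (FreeGroup (Fin 2)) :=
    fun l => (l.map (fun x => if x then G else D)).prod with hPdef
  have hPt : ∀ l, P (true :: l) = G * P l := by intro l; simp [hPdef]
  have hPf : ∀ l, P (false :: l) = D * P l := by intro l; simp [hPdef]
  -- entry recursions
  have entG : ∀ (Q : MulAut (FreeGroup (Fin 2))) (j : Fin 2),
      ent (G * Q) 0 j = ent Q 0 j + ent Q 1 j ∧ ent (G * Q) 1 j = ent Q 1 j := by
    intro Q j
    constructor
    · simpa [ent, MulAut.mul_apply] using hG0 (Q (of j))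
    · simpa [ent, MulAut.mul_apply] using hG1 (Q (of j))
  have entD : ∀ (Q : MulAut (FreeGroup (Fin 2))) (j : Fin 2),
      ent (D * Q) 0 j = ent Q 0 j ∧ ent (D * Q) 1 j = ent Q 0 j + ent Q 1 j := by
    intro Q j
    constructor
    · simpa [ent, MulAut.mul_apply] using hD0 (Q (of j))
    · simpa [ent, MulAut.mul_apply] using hD1 (Q (of j))
  have entone : ∀ i j : Fin 2, ent 1 i j = if j = i then 1 else 0 := by
    intro i j; simp [ent, EE_of]
  -- invariant: nonnegativity and determinant 1
  have inv : ∀ l : List Bool,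
      (0 ≤ ent (P l) 0 0 ∧ 0 ≤ ent (P l) 0 1 ∧ 0 ≤ ent (P l) 1 0 ∧ 0 ≤ ent (P l) 1 1) ∧
      ent (P l) 0 0 * ent (P l) 1 1 - ent (P l) 0 1 * ent (P l) 1 0 = 1 := by
    intro l
    induction l with
    | nil =>
      have h1 : P [] = 1 := rfl
      rw [h1]
      simp [entone]
    | cons x l ih =>
      obtain ⟨⟨p00, p01, p10, p11⟩, ihdet⟩ := ih
      cases x
      · rw [hPf]
        rw [(entD (P l) 0).1, (entD (P l) 1).1, (entD (P l) 0).2, (entD (P l) 1).2]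
        refine ⟨⟨p00, p01, by linarith, by linarith⟩, by linear_combination ihdet⟩
      · rw [hPt]
        rw [(entG (P l) 0).1, (entG (P l) 1).1, (entG (P l) 0).2, (entG (P l) 1).2]
        refine ⟨⟨by linarith, by linarith, p10, p11⟩, by linear_combination ihdet⟩
  -- a product starting with a generator is not the identity
  have hnc : ∀ (x : Bool) (l : List Bool), P (x :: l) ≠ P [] := by
    intro x l h
    have he : ∀ i j, ent (P (x :: l)) i j = ent (P []) i j := by rw [h]; intro _ _; rfl
    obtain ⟨⟨p00, p01, p10, p11⟩, _⟩ := inv l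
    cases x
    · have h10 := he 1 0; have h00 := he 0 0
      rw [hPf, (entD (P l) 0).2] at h10
      rw [hPf, (entD (P l) 0).1] at h00
      rw [show P [] = 1 from rfl, entone] at h10 h00
      simp at h10 h00
      omega
    · have h01 := he 0 1; have h11 := he 1 1
      rw [hPt, (entG (P l) 1).1] at h01
      rw [hPt, (entG (P l) 1).2] at h11
      rw [show P [] = 1 from rfl, entone] at h01 h11
      simp at h01 h11
      omega
  -- products starting with different generators differ
  have hGD : ∀ (l l' : List Bool), P (true :: l) ≠ P (false :: l') := by
    intro l l' h
    have he : ∀ i j, ent (P (true :: l)) i j = ent (P (false :: l')) i j := by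
      rw [h]; intro _ _; rfl
    obtain ⟨⟨p00, p01, p10, p11⟩, hdet⟩ := inv l
    obtain ⟨⟨q00, q01, q10, q11⟩, _⟩ := inv l'
    have e00 := he 0 0; have e01 := he 0 1; have e10 := he 1 0; have e11 := he 1 1
    rw [hPt, hPf, (entG (P l) 0).1, (entD (P l') 0).1] at e00
    rw [hPt, hPf, (entG (P l) 1).1, (entD (P l') 1).1] at e01
    rw [hPt, hPf, (entG (P l) 0).2, (entD (P l') 0).2] at e10
    rw [hPt, hPf, (entG (P l) 1).2, (entD (P l') 1).2] at e11
    have hA0 : ent (P l) 0 0 = 0 := by omega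
    have hB0 : ent (P l) 0 1 = 0 := by omega
    rw [hA0, hB0] at hdet
    simp at hdet
  -- main induction
  intro l₁
  induction l₁ with
  | nil =>
    intro l₂ h
    cases l₂ with
    | nil => rfl
    | cons y l => exact absurd ((show P (y :: l) = P [] from h.symm)) (hnc y l)
  | cons x l ih =>
    intro l₂ h
    cases l₂ with
    | nil => exact absurd (show P (x :: l) = P [] from h) (hnc x l)
    | cons y l' =>
      have h' : P (x :: l) = P (y :: l') := h
      cases x <;> cases y
      · rw [hPf, hPf] at h'
        rw [ih l' (mul_left_cancel h')]
      · exact absurd h'.symm (hGD l' l)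
      · exact absurd h' (hGD l l')
      · rw [hPt, hPt] at h'
        rw [ih l' (mul_left_cancel h')]
end
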